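/- The map Γ is Lipschitz with respect to the sup norm: for all bounded functions f, f̃ : [0,T] → ℝᴺ one has ‖Γ(f) − Γ(f̃)‖_T ≤ (1 + √N) ‖f − f̃‖_T. -/

import Mathlib

open Set

/-- The coordinate sum `1 · x` of a vector in Euclidean space. -/
noncomputable def sumC {N : ℕ} (x : EuclideanSpace ℝ (Fin N)) : ℝ := ∑ i, x i

/-- The regulator `g_f(t) = sup_{0 ≤ u ≤ t} (θ - 1·f(u))⁻`. -/
noncomputable def reg (N : ℕ) (θ : ℝ) (f : ℝ → EuclideanSpace ℝ (Fin N)) (t : ℝ) : ℝ :=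
  sSup ((fun u => max (sumC (f u) - θ) 0) '' Icc 0 t)

/-- The `N`-th standard basis vector `e_N`. -/
noncomputable def eN (N : ℕ) (hN : 1 ≤ N) : EuclideanSpace ℝ (Fin N) :=
  EuclideanSpace.single ⟨N - 1, by omega⟩ 1

/-- The Skorohod-type reflection map `Γ(f)(t) = f(t) - g_f(t) e_N`. -/
noncomputable def Gam (N : ℕ) (hN : 1 ≤ N) (θ : ℝ) (f : ℝ → EuclideanSpace ℝ (Fin N))
    (t : ℝ) : EuclideanSpace ℝ (Fin N) :=
  f t - reg N θ f t • eN N hN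

/-- The sup norm `‖f‖_T = sup_{t ∈ [0,T]} ‖f(t)‖`. -/
noncomputable def supNorm (N : ℕ) (T : ℝ) (f : ℝ → EuclideanSpace ℝ (Fin N)) : ℝ :=
  sSup ((fun t => ‖f t‖) '' Icc 0 T)

/-- Cauchy–Schwarz for the coordinate sum: `|1 · x| ≤ √N ‖x‖`. -/
lemma abs_sumC_le {N : ℕ} (x : EuclideanSpace ℝ (Fin N)) :
    |sumC x| ≤ Real.sqrt N * ‖x‖ := by
  set o : EuclideanSpace ℝ (Fin N) := WithLp.toLp 2 (fun _ => 1) with ho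
  have h := abs_real_inner_le_norm o x
  have h1 : inner ℝ o x = sumC x := by
    simp [PiLp.inner_apply, ho, sumC]
  have h2 : ‖o‖ = Real.sqrt N := by
    simp [EuclideanSpace.norm_eq, ho]
  rwa [h1, h2] at h

/-- `sumC` is additive over subtraction. -/
lemma sumC_sub {N : ℕ} (x y : EuclideanSpace ℝ (Fin N)) :
    sumC (x - y) = sumC x - sumC y := by
  simp [sumC, Finset.sum_sub_distrib]

/-- Comparison of suprema of images with pointwise bound. -/
lemma csSup_image_le_add {s : Set ℝ} (hs : s.Nonempty) {p q : ℝ → ℝ}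
    (hq : BddAbove (q '' s)) (ε : ℝ) (h : ∀ u ∈ s, p u ≤ q u + ε) :
    sSup (p '' s) ≤ sSup (q '' s) + ε := by
  apply csSup_le (hs.image _)
  rintro x ⟨u, hu, rfl⟩
  exact le_trans (h u hu) (by have := le_csSup hq (⟨u, hu, rfl⟩ : q u ∈ q '' s); linarith)

lemma norm_eN (N : ℕ) (hN : 1 ≤ N) : ‖eN N hN‖ = 1 := by
  simp [eN]

/-- The reflection map `Γ` is Lipschitz with constant `1 + √N` in the sup norm. -/
theorem gamma_lipschitz (N : ℕ) (hN : 1 ≤ N) (θ T : ℝ) (hT : 0 < T)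
    (f ftil : ℝ → EuclideanSpace ℝ (Fin N))
    (hf : ∃ C, ∀ t ∈ Icc (0:ℝ) T, ‖f t‖ ≤ C)
    (hftil : ∃ C, ∀ t ∈ Icc (0:ℝ) T, ‖ftil t‖ ≤ C) :
    supNorm N T (fun t => Gam N hN θ f t - Gam N hN θ ftil t)
      ≤ (1 + Real.sqrt N) * supNorm N T (fun t => f t - ftil t) := by
  obtain ⟨C, hC⟩ := hf
  obtain ⟨C', hC'⟩ := hftil
  set D := supNorm N T (fun t => f t - ftil t) with hD
  have hD0 : 0 ≤ D := by
    apply Real.sSup_nonneg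
    rintro x ⟨t, _, rfl⟩
    positivity
  have hDbdd : BddAbove ((fun t => ‖f t - ftil t‖) '' Icc 0 T) := by
    refine ⟨C + C', ?_⟩
    rintro x ⟨t, ht, rfl⟩
    exact le_trans (norm_sub_le _ _) (add_le_add (hC t ht) (hC' t ht))
  have hDle : ∀ t ∈ Icc (0:ℝ) T, ‖f t - ftil t‖ ≤ D := fun t ht =>
    le_csSup hDbdd ⟨t, ht, rfl⟩
  -- boundedness of the regulator sets
  have hbdd : ∀ (g : ℝ → EuclideanSpace ℝ (Fin N)) (B : ℝ),
      (∀ u ∈ Icc (0:ℝ) T, ‖g u‖ ≤ B) → ∀ t ∈ Icc (0:ℝ) T,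
      BddAbove ((fun u => max (sumC (g u) - θ) 0) '' Icc 0 t) := by
    intro g B hB t ht
    refine ⟨max (Real.sqrt N * B - θ) 0, ?_⟩
    rintro x ⟨u, hu, rfl⟩
    have hu' : u ∈ Icc (0:ℝ) T := ⟨hu.1, hu.2.trans ht.2⟩
    have h1 : sumC (g u) ≤ Real.sqrt N * B := by
      calc sumC (g u) ≤ |sumC (g u)| := le_abs_self _
        _ ≤ Real.sqrt N * ‖g u‖ := abs_sumC_le _
        _ ≤ Real.sqrt N * B :=
          mul_le_mul_of_nonneg_left (hB u hu') (Real.sqrt_nonneg _)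
    exact max_le_max (sub_le_sub_right h1 θ) le_rfl
  -- the regulator difference bound
  have hreg : ∀ t ∈ Icc (0:ℝ) T, |reg N θ f t - reg N θ ftil t| ≤ Real.sqrt N * D := by
    intro t ht
    have hne : (Icc (0:ℝ) t).Nonempty := ⟨0, le_refl 0, ht.1⟩
    have key : ∀ (g g' : ℝ → EuclideanSpace ℝ (Fin N)),
        (∀ u ∈ Icc (0:ℝ) T, ‖g u - g' u‖ ≤ D) →
        ∀ u ∈ Icc (0:ℝ) t,
        max (sumC (g u) - θ) 0 ≤ max (sumC (g' u) - θ) 0 + Real.sqrt N * D := by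
      intro g g' hgg' u hu
      have hu' : u ∈ Icc (0:ℝ) T := ⟨hu.1, hu.2.trans ht.2⟩
      have h1 : |max (sumC (g u) - θ) 0 - max (sumC (g' u) - θ) 0|
          ≤ |(sumC (g u) - θ) - (sumC (g' u) - θ)| := abs_max_sub_max_le_abs _ _ _
      have h2 : |(sumC (g u) - θ) - (sumC (g' u) - θ)| = |sumC (g u - g' u)| := by
        rw [sumC_sub]; ring_nf
      have h3 : |sumC (g u - g' u)| ≤ Real.sqrt N * D :=
        le_trans (abs_sumC_le _)
          (mul_le_mul_of_nonneg_left (hgg' u hu') (Real.sqrt_nonneg _))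
      have := le_trans h1 (h2 ▸ h3)
      linarith [abs_sub_le_iff.mp this |>.1]
    have hDle' : ∀ u ∈ Icc (0:ℝ) T, ‖ftil u - f u‖ ≤ D := by
      intro u hu
      rw [norm_sub_rev]
      exact hDle u hu
    rw [abs_sub_le_iff]
    constructor
    · have := csSup_image_le_add hne (hbdd ftil C' hC' t ht) (Real.sqrt N * D)
        (key f ftil hDle)
      simpa [reg, sub_le_iff_le_add, add_comm] using this
    · have := csSup_image_le_add hne (hbdd f C hC t ht) (Real.sqrt N * D)
        (key ftil f hDle')
      simpa [reg, sub_le_iff_le_add, add_comm] using this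
  -- final bound
  apply Real.sSup_le
  · rintro x ⟨t, ht, rfl⟩
    have heq : Gam N hN θ f t - Gam N hN θ ftil t
        = (f t - ftil t) - (reg N θ f t - reg N θ ftil t) • eN N hN := by
      simp only [Gam, sub_smul]
      abel
    calc ‖Gam N hN θ f t - Gam N hN θ ftil t‖
        = ‖(f t - ftil t) - (reg N θ f t - reg N θ ftil t) • eN N hN‖ := by rw [heq]
      _ ≤ ‖f t - ftil t‖ + ‖(reg N θ f t - reg N θ ftil t) • eN N hN‖ := norm_sub_le _ _
      _ = ‖f t - ftil t‖ + |reg N θ f t - reg N θ ftil t| := by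
          rw [norm_smul, norm_eN, mul_one, Real.norm_eq_abs]
      _ ≤ D + Real.sqrt N * D := add_le_add (hDle t ht) (hreg t ht)
      _ = (1 + Real.sqrt N) * D := by ring
  · positivity
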